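/- Let N > M ≥ 1 and suppose H ∈ ℂ^{N×M} has rank M, and that for every nonzero z in the left null space S = {z ∈ ℂ^N : z^H H = 0} and every index i, whenever a coordinate-restriction subspace of S is considered as in the row-by-row construction of a Hermitian annihilator of H, the dimension bounds are tight. Then the real vector space {A ∈ ℂ^{N×N} : A Hermitian, A H = 0} has dimension exactly (N−M)², and consequently the ℝ-linear map A ↦ AH on Hermitian matrices has image of real dimension N² − (N−M)². -/

import Mathlib

open Matrix

/-- The real vector space of `N × N` Hermitian matrices `A` with `A * H = 0`. -/
noncomputable def hermitianAnnihilator (N M : ℕ) (H : Matrix (Fin N) (Fin M) ℂ) :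
    Submodule ℝ (Matrix (Fin N) (Fin N) ℂ) where
  carrier := {A | Aᴴ = A ∧ A * H = 0}
  add_mem' := by
    intro a b ha hb
    simp only [Set.mem_setOf_eq] at *
    constructor
    · simp [conjTranspose_add, ha.1, hb.1]
    · rw [Matrix.add_mul, ha.2, hb.2, add_zero]
  zero_mem' := by simp
  smul_mem' := by
    intro r A hA
    simp only [Set.mem_setOf_eq] at *
    constructor
    · simp [conjTranspose_smul, hA.1]
    · rw [Matrix.smul_mul, hA.2, smul_zero]

noncomputable def herm (n : ℕ) : Submodule ℝ (Matrix (Fin n) (Fin n) ℂ) :=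
  hermitianAnnihilator n 0 0

lemma mem_herm {n : ℕ} {A : Matrix (Fin n) (Fin n) ℂ} : A ∈ herm n ↔ Aᴴ = A :=
  ⟨fun h => h.1, fun h => ⟨h, by ext i j; exact j.elim0⟩⟩

noncomputable def hermProd (n : ℕ) :
    (herm n × herm n) →ₗ[ℝ] Matrix (Fin n) (Fin n) ℂ where
  toFun p := p.1.1 + Complex.I • p.2.1
  map_add' p q := by
    simp only [Submodule.coe_add, Prod.fst_add, Prod.snd_add, smul_add]
    abel
  map_smul' r p := by
    simp only [Prod.smul_fst, Prod.smul_snd, SetLike.val_smul, RingHom.id_apply, smul_add,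
      smul_comm r Complex.I]

lemma hermProd_bij (n : ℕ) : Function.Bijective (hermProd n) := by
  constructor
  · rw [← LinearMap.ker_eq_bot, LinearMap.ker_eq_bot']
    rintro ⟨⟨X, hX⟩, ⟨Y, hY⟩⟩ h
    have h0 : X + Complex.I • Y = 0 := h
    have h1 : X - Complex.I • Y = 0 := by
      have := congrArg conjTranspose h0
      simpa [conjTranspose_add, conjTranspose_smul, (mem_herm.1 hX), (mem_herm.1 hY),
        Complex.star_def, Complex.conj_I, neg_smul, sub_eq_add_neg] using this
    have hXe : X = 0 := by
      have := congrArg₂ (· + ·) h0 h1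
      have h2 : X + X = 0 := by simpa [add_add_sub_cancel, two_smul, smul_eq_zero] using this
      have := congrArg (((1:ℝ)/2) • ·) h2
      simpa [smul_add, smul_smul, ← two_smul ℝ X, smul_smul] using this
    have hYe : Y = 0 := by
      have : Complex.I • Y = 0 := by rw [hXe] at h0; simpa using h0
      simpa [smul_eq_zero, Complex.I_ne_zero] using this
    ext <;> simp [hXe, hYe]
  · intro A
    refine ⟨⟨⟨((2:ℂ)⁻¹) • (A + Aᴴ), mem_herm.2 ?_⟩,
      ⟨((-(2:ℂ)⁻¹ * Complex.I)) • (A - Aᴴ), mem_herm.2 ?_⟩⟩, ?_⟩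
    · simp [conjTranspose_smul, conjTranspose_add, add_comm, star_inv₀]
    · simp only [conjTranspose_smul, conjTranspose_sub, star_mul', star_neg, star_inv₀,
        Complex.star_def, Complex.conj_I, Complex.conj_ofNat]
      simp only [conjTranspose_conjTranspose]
      module
    · show ((2:ℂ)⁻¹) • (A + Aᴴ) + Complex.I • ((-(2:ℂ)⁻¹ * Complex.I) • (A - Aᴴ)) = A
      rw [smul_smul, show Complex.I * (-(2:ℂ)⁻¹ * Complex.I) = (2:ℂ)⁻¹ by
        rw [mul_comm, mul_assoc, Complex.I_mul_I]; ring]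
      rw [← smul_add, add_add_sub_cancel, ← two_smul ℂ A, smul_smul]
      simp

lemma finrank_herm (n : ℕ) : Module.finrank ℝ (herm n) = n ^ 2 := by
  have e := LinearEquiv.ofBijective (hermProd n) (hermProd_bij n)
  have h1 : Module.finrank ℝ (herm n × herm n) = Module.finrank ℝ (Matrix (Fin n) (Fin n) ℂ) :=
    e.finrank_eq
  rw [Module.finrank_prod, Module.finrank_matrix, Complex.finrank_real_complex] at h1
  simp only [Fintype.card_fin] at h1
  have : n * n * 2 = (n^2) * 2 := by ring
  omega

open scoped ComplexOrder in
lemma finrank_hermAnn (N M : ℕ) (hMN : M ≤ N) (H : Matrix (Fin N) (Fin M) ℂ)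
    (hr : H.rank = M) :
    Module.finrank ℝ (hermitianAnnihilator N M H) = (N - M) ^ 2 := by
  classical
  set K := N - M with hK
  have hdim : Module.finrank ℂ (LinearMap.ker Hᴴ.mulVecLin) = K := by
    have h1 := LinearMap.finrank_range_add_finrank_ker Hᴴ.mulVecLin
    have h2 : Module.finrank ℂ (Fin N → ℂ) = N := by simp
    have h3 : Module.finrank ℂ (LinearMap.range Hᴴ.mulVecLin) = M :=
      H.rank_conjTranspose.trans hr
    rw [h2, h3] at h1
    omega
  let b : Module.Basis (Fin K) ℂ (LinearMap.ker Hᴴ.mulVecLin) :=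
    Module.finBasisOfFinrankEq ℂ _ hdim
  obtain ⟨U, hU⟩ : ∃ U : Matrix (Fin N) (Fin K) ℂ,
      U = Matrix.of fun i k => (b k : Fin N → ℂ) i := ⟨_, rfl⟩
  have hbk : ∀ k, Hᴴ.mulVec ((b k : Fin N → ℂ)) = 0 := by
    intro k
    rw [← Matrix.mulVecLin_apply]
    exact LinearMap.mem_ker.mp (b k).2
  have hHU : Hᴴ * U = 0 := by
    ext i k
    have h : (Hᴴ * U) i k = Hᴴ.mulVec ((b k : Fin N → ℂ)) i := by
      simp [Matrix.mul_apply, Matrix.mulVec, dotProduct, hU]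
    rw [h, hbk k]
    rfl
  have hUH : Uᴴ * H = 0 := by
    have := congrArg conjTranspose hHU
    simpa [conjTranspose_mul] using this
  have hUvec : ∀ c : Fin K → ℂ,
      U.mulVec c = ((∑ k, c k • b k : LinearMap.ker Hᴴ.mulVecLin) : Fin N → ℂ) := by
    intro c
    ext i
    rw [AddSubmonoidClass.coe_finset_sum]
    simp [Matrix.mulVec, dotProduct, hU, Finset.sum_apply, mul_comm]
  have hUinj : ∀ c, U.mulVec c = 0 → c = 0 := by
    intro c hc
    have h0 : (∑ k, c k • b k : LinearMap.ker Hᴴ.mulVecLin) = 0 := by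
      apply Subtype.coe_injective
      show ((∑ k, c k • b k : LinearMap.ker Hᴴ.mulVecLin) : Fin N → ℂ) = _
      rw [← hUvec c, hc]
      rfl
    funext k
    exact Fintype.linearIndependent_iff.1 b.linearIndependent c h0 k
  have hrep : ∀ x : LinearMap.ker Hᴴ.mulVecLin,
      U.mulVec (fun k => b.repr x k) = (x : Fin N → ℂ) := by
    intro x
    rw [hUvec]
    exact congrArg Subtype.val (b.sum_repr x)
  obtain ⟨G, hG⟩ : ∃ G : Matrix (Fin K) (Fin K) ℂ, G = Uᴴ * U := ⟨_, rfl⟩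
  have hGdet : IsUnit G.det := by
    rw [← Matrix.isUnit_iff_isUnit_det, ← Matrix.mulVec_injective_iff_isUnit]
    have hker : LinearMap.ker G.mulVecLin = ⊥ := by
      rw [hG, Matrix.ker_mulVecLin_conjTranspose_mul_self, LinearMap.ker_eq_bot']
      intro c hc
      exact hUinj c (by rwa [Matrix.mulVecLin_apply] at hc)
    intro x y hxy
    have h : G.mulVecLin x = G.mulVecLin y := by
      simpa [Matrix.mulVecLin_apply] using hxy
    exact LinearMap.ker_eq_bot.1 hker h
  have hGG : G⁻¹ * G = 1 := Matrix.nonsing_inv_mul G hGdet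
  have hGG' : G * G⁻¹ = 1 := Matrix.mul_nonsing_inv G hGdet
  have hGH : Gᴴ = G := by rw [hG]; simp [conjTranspose_mul]
  have hGiH : (G⁻¹)ᴴ = G⁻¹ := by rw [Matrix.conjTranspose_nonsing_inv, hGH]
  obtain ⟨P, hP⟩ : ∃ P : Matrix (Fin N) (Fin N) ℂ, P = U * G⁻¹ * Uᴴ := ⟨_, rfl⟩
  have hPU : P * U = U := by
    have h : P * U = U * (G⁻¹ * G) := by
      rw [hP, hG, Matrix.mul_assoc, Matrix.mul_assoc]
    rw [h, hGG, Matrix.mul_one]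
  have hPH : Pᴴ = P := by
    rw [hP]
    simp [conjTranspose_mul, hGiH, Matrix.mul_assoc]
  have hPA : ∀ A : Matrix (Fin N) (Fin N) ℂ, Aᴴ = A → A * H = 0 → P * A = A := by
    intro A hA hAH
    have hHA : Hᴴ * A = 0 := by
      have := congrArg conjTranspose hAH
      simpa [conjTranspose_mul, hA] using this
    ext i j
    have hcol : (fun i' => A i' j) ∈ LinearMap.ker Hᴴ.mulVecLin := by
      rw [LinearMap.mem_ker, Matrix.mulVecLin_apply]
      funext i'
      have h0 : (Hᴴ * A) i' j = 0 := by rw [hHA]; rfl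
      simpa [Matrix.mulVec, dotProduct, Matrix.mul_apply] using h0
    have h2 : U.mulVec (fun k => b.repr ⟨fun i' => A i' j, hcol⟩ k) = fun i' => A i' j :=
      hrep ⟨fun i' => A i' j, hcol⟩
    have h1 : P.mulVec (fun i' => A i' j) = fun i' => A i' j := by
      rw [← h2, Matrix.mulVec_mulVec, hPU]
    have h3 : (P * A) i j = P.mulVec (fun i' => A i' j) i := by
      simp [Matrix.mul_apply, Matrix.mulVec, dotProduct]
    rw [h3, h1]
  have eqv : (hermitianAnnihilator N M H) ≃ₗ[ℝ] herm K := by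
    refine
      { toFun := fun A => ⟨G⁻¹ * (Uᴴ * (A : Matrix (Fin N) (Fin N) ℂ) * U) * G⁻¹,
          mem_herm.2 ?_⟩
        invFun := fun B => ⟨U * (B : Matrix (Fin K) (Fin K) ℂ) * Uᴴ, ?_, ?_⟩
        map_add' := ?_
        map_smul' := ?_
        left_inv := ?_
        right_inv := ?_ }
    · simp only [conjTranspose_mul, hGiH, conjTranspose_conjTranspose, A.2.1]
      simp [Matrix.mul_assoc]
    · intro x y
      apply Subtype.ext
      show G⁻¹ * (Uᴴ * ((x : Matrix (Fin N) (Fin N) ℂ) + (y : Matrix (Fin N) (Fin N) ℂ)) * U) * G⁻¹ = _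
      simp [Matrix.mul_add, Matrix.add_mul]
    · intro r x
      apply Subtype.ext
      show G⁻¹ * (Uᴴ * (r • (x : Matrix (Fin N) (Fin N) ℂ)) * U) * G⁻¹ = _
      simp [Matrix.mul_smul, Matrix.smul_mul]
    · simp only [conjTranspose_mul, conjTranspose_conjTranspose, mem_herm.1 B.2]
      simp [Matrix.mul_assoc]
    · rw [Matrix.mul_assoc, hUH, Matrix.mul_zero]
    · rintro ⟨A, hA, hAH⟩
      apply Subtype.ext
      show U * (G⁻¹ * (Uᴴ * A * U) * G⁻¹) * Uᴴ = A
      have hassoc : U * (G⁻¹ * (Uᴴ * A * U) * G⁻¹) * Uᴴ = P * (A * P) := by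
        rw [hP]
        simp only [Matrix.mul_assoc]
      have hAP : A * P = A := by
        have := congrArg conjTranspose (hPA A hA hAH)
        rwa [conjTranspose_mul, hPH, hA] at this
      rw [hassoc, hAP, hPA A hA hAH]
    · rintro ⟨B, hB⟩
      apply Subtype.ext
      show G⁻¹ * (Uᴴ * (U * B * Uᴴ) * U) * G⁻¹ = B
      have h1 : Uᴴ * (U * B * Uᴴ) * U = G * (B * G) := by
        rw [hG]
        simp only [Matrix.mul_assoc]
      rw [h1, ← Matrix.mul_assoc G⁻¹, hGG, Matrix.one_mul, Matrix.mul_assoc, hGG',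
        Matrix.mul_one]
  rw [eqv.finrank_eq, finrank_herm]

/-- Deterministic core of Theorem 1: for a generic `H` (full column rank `M < N`, no
standard basis vector in its column space), the space of Hermitian annihilators of `H`
has real dimension exactly `(N−M)²`, and the image `{A H : A Hermitian}` has real
dimension `N² − (N−M)²`. -/
theorem stmt_19 (N M : ℕ) (hM1 : 1 ≤ M) (hMN : M < N)
    (H : Matrix (Fin N) (Fin M) ℂ) (hr : H.rank = M)
    (he : ∀ i : Fin N, ¬ ∃ x : Fin M → ℂ, H.mulVec x = Pi.single i 1) :
    Module.finrank ℝ (hermitianAnnihilator N M H) = (N - M) ^ 2 ∧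
    Module.finrank ℝ (Submodule.span ℝ
        {X : Matrix (Fin N) (Fin M) ℂ |
          ∃ A : Matrix (Fin N) (Fin N) ℂ, Aᴴ = A ∧ X = A * H})
      = N ^ 2 - (N - M) ^ 2 := by
  have h1 : Module.finrank ℝ (hermitianAnnihilator N M H) = (N - M) ^ 2 :=
    finrank_hermAnn N M hMN.le H hr
  refine ⟨h1, ?_⟩
  let f : herm N →ₗ[ℝ] Matrix (Fin N) (Fin M) ℂ :=
    { toFun := fun A => (A : Matrix (Fin N) (Fin N) ℂ) * H
      map_add' := by intro x y; simp [Matrix.add_mul]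
      map_smul' := by intro r x; simp [Matrix.smul_mul] }
  have hset : {X : Matrix (Fin N) (Fin M) ℂ |
      ∃ A : Matrix (Fin N) (Fin N) ℂ, Aᴴ = A ∧ X = A * H} = ↑(LinearMap.range f) := by
    ext X
    simp only [Set.mem_setOf_eq, SetLike.mem_coe, LinearMap.mem_range]
    constructor
    · rintro ⟨A, hA, rfl⟩
      exact ⟨⟨A, mem_herm.2 hA⟩, rfl⟩
    · rintro ⟨⟨A, hA⟩, rfl⟩
      exact ⟨A, mem_herm.1 hA, rfl⟩
  rw [hset, Submodule.span_eq]
  have hker : Module.finrank ℝ (LinearMap.ker f) = (N - M) ^ 2 := by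
    rw [← h1]
    exact LinearEquiv.finrank_eq
      { toFun := fun x => ⟨(x : herm N), (x : herm N).2.1, LinearMap.mem_ker.mp x.2⟩
        invFun := fun A => ⟨⟨(A : Matrix (Fin N) (Fin N) ℂ), mem_herm.2 A.2.1⟩,
          LinearMap.mem_ker.mpr A.2.2⟩
        map_add' := fun x y => rfl
        map_smul' := fun r x => rfl
        left_inv := fun x => rfl
        right_inv := fun A => rfl }
  have hrank := LinearMap.finrank_range_add_finrank_ker f
  rw [finrank_herm, hker] at hrank
  have hKle : (N - M) ^ 2 ≤ N ^ 2 := Nat.pow_le_pow_left (Nat.sub_le N M) 2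
  omega
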